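/- (Theorem 2.2, first identity, q-case.) Let n ≥ 1 be a natural number, α₁, α₂ ∈ (0,1) and m₂ ∈ ℕ. Then the double series over all pairs (w₁,w₂) ∈ ℕ × ℕ of [w₂]_{m₂,q⁻¹} · g(w₁,w₂) converges, with sum equal to α₂^{m₂} · [n+m₂−1]_{m₂,q}. -/

import Mathlib

open Finset

/-- q-integer `[k]_q = (1 - q^k)/(1 - q)`. -/
noncomputable def qInt (q : ℝ) (k : ℤ) : ℝ := (1 - q ^ k) / (1 - q)

/-- q-factorial `[n]_q! = ∏_{i=1}^n [i]_q`. -/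
noncomputable def qFact (q : ℝ) (n : ℕ) : ℝ := ∏ i ∈ Finset.Icc 1 n, qInt q (i : ℤ)

/-- q-binomial coefficient `C_q(n,k)`. -/
noncomputable def qBinom (q : ℝ) (n k : ℕ) : ℝ := qFact q n / (qFact q k * qFact q (n - k))

/-- q-falling factorial `[u]_{m,q} = ∏_{i=1}^m [u-i+1]_q`. -/
noncomputable def qFall (q : ℝ) (u : ℤ) (m : ℕ) : ℝ := ∏ i ∈ Finset.Icc 1 m, qInt q (u - (i : ℤ) + 1)

/-- `[k]_{q⁻¹} = q^{1-k} · [k]_q`. -/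
noncomputable def qIntInv (q : ℝ) (k : ℤ) : ℝ := q ^ (1 - k) * qInt q k

/-- `[u]_{m,q⁻¹} = ∏_{i=1}^m [u-i+1]_{q⁻¹}`. -/
noncomputable def qFallInv (q : ℝ) (u : ℤ) (m : ℕ) : ℝ := ∏ i ∈ Finset.Icc 1 m, qIntInv q (u - (i : ℤ) + 1)

/-- `b(k) = k(k-1)/2`. -/
def bb (k : ℕ) : ℕ := k * (k - 1) / 2

/-- `⟨1 ⊕ α⟩_m = ∏_{i=1}^m (1 + α q^{i-1})`. -/
noncomputable def oplus (q α : ℝ) (m : ℕ) : ℝ := ∏ i ∈ Finset.Icc 1 m, (1 + α * q ^ (i - 1))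

/-- `⟨1 ⊖ β⟩_m = ∏_{i=1}^m (1 - β q^{i-1})`. -/
noncomputable def ominus (q β : ℝ) (m : ℕ) : ℝ := ∏ i ∈ Finset.Icc 1 m, (1 - β * q ^ (i - 1))

/-- q-trinomial coefficient `T_q(n; x₁, x₂)`. -/
noncomputable def qTri (q : ℝ) (n x1 x2 : ℕ) : ℝ :=
  qFact q n / (qFact q x1 * qFact q x2 * qFact q (n - x1 - x2))

/-- pmf of the negative q-trinomial distribution of the first kind. -/
noncomputable def gpmf (q a1 a2 : ℝ) (n w1 w2 : ℕ) : ℝ :=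
  (qFact q (n + w1 + w2 - 1) / (qFact q w1 * qFact q w2 * qFact q (n - 1))) *
    a1 ^ w1 * a2 ^ w2 * q ^ (bb w1 + bb w2) /
    (oplus q a1 (n + w1 + w2) * oplus q a2 (n + w2))

section basics
variable {q : ℝ} (hq0 : 0 < q) (hq1 : q < 1)

lemma bb_add (v m : ℕ) : bb (v + m) = bb v + bb m + v * m := by
  have h : ∀ k : ℕ, 2 * bb k = k * (k - 1) := by
    intro k
    have : 2 ∣ k * (k - 1) := (Nat.even_mul_pred_self k).two_dvd
    simp [bb, Nat.mul_div_cancel' this]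
  have h2 : 2 * bb (v + m) = 2 * (bb v + bb m + v * m) := by
    rcases Nat.eq_zero_or_pos v with rfl | hv
    · simp [bb]
    rcases Nat.eq_zero_or_pos m with rfl | hm
    · simp [bb]
    have e1 := h (v + m); have e2 := h v; have e3 := h m
    have : (v + m) * (v + m - 1) = v * (v - 1) + m * (m - 1) + 2 * (v * m) := by
      cases' v with v; · omega
      cases' m with m; · omega
      simp [Nat.succ_sub_one]; ring
    omega
  omega

lemma bb_succ (j : ℕ) : bb (j + 1) = bb j + j := by
  have := bb_add j 1; simpa [bb] using this

include hq0 hq1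

lemma qInt_pos {k : ℤ} (hk : 0 < k) : 0 < qInt q k := by
  have h1 : q ^ k < 1 := zpow_lt_one₀ hq0 hq1 hk
  have : (0:ℝ) < 1 - q := by linarith
  exact div_pos (by linarith) this

lemma qInt_nonneg {k : ℤ} (hk : 0 ≤ k) : 0 ≤ qInt q k := by
  rcases hk.eq_or_lt with h | h
  · simp [qInt, ← h]
  · exact (qInt_pos hq0 hq1 h).le

lemma qInt_le {k : ℤ} : qInt q k ≤ 1 / (1 - q) := by
  have h : (0:ℝ) < 1 - q := by linarith
  have h2 : (0:ℝ) ≤ q ^ k := (zpow_pos hq0 k).le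
  rw [qInt, div_le_div_iff₀ h h]
  nlinarith

lemma qFact_pos (n : ℕ) : 0 < qFact q n := by
  apply Finset.prod_pos
  intro i hi
  exact qInt_pos hq0 hq1 (by exact_mod_cast (Finset.mem_Icc.1 hi).1)

lemma qBinom_pos (n k : ℕ) : 0 < qBinom q n k :=
  div_pos (qFact_pos hq0 hq1 _) (mul_pos (qFact_pos hq0 hq1 _) (qFact_pos hq0 hq1 _))

end basics

section more
variable {q : ℝ} (hq0 : 0 < q) (hq1 : q < 1)

lemma oplus_succ (α : ℝ) (m : ℕ) : oplus q α (m + 1) = oplus q α m * (1 + α * q ^ m) := by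
  rw [oplus, Finset.prod_Icc_succ_top (by omega), ← oplus]
  simp

lemma qFact_succ (n : ℕ) : qFact q (n + 1) = qFact q n * qInt q (n + 1) := by
  rw [qFact, Finset.prod_Icc_succ_top (by omega), ← qFact]
  norm_cast

include hq0 in
lemma one_le_oplus {α : ℝ} (hα : 0 ≤ α) (m : ℕ) : 1 ≤ oplus q α m := by
  rw [oplus]
  calc (1:ℝ) = ∏ i ∈ Finset.Icc 1 m, 1 := by simp
  _ ≤ _ := by
      apply Finset.prod_le_prod (by intros; norm_num)
      intro i _
      have : (0:ℝ) ≤ α * q ^ (i-1) := by positivity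
      linarith

include hq0 in
lemma oplus_pos {α : ℝ} (hα : 0 ≤ α) (m : ℕ) : 0 < oplus q α m :=
  lt_of_lt_of_le one_pos (one_le_oplus hq0 hα m)

include hq0 hq1 in
lemma qInt_add (a b : ℕ) : qInt q ((a : ℤ) + b) = qInt q a + q ^ a * qInt q b := by
  have h : (1:ℝ) - q ≠ 0 := by intro h; nlinarith [sub_eq_zero.mp h]
  rw [qInt, qInt, qInt, zpow_add₀ (ne_of_gt hq0), zpow_natCast, zpow_natCast]
  field_simp
  ring

end more

section binom
variable {q : ℝ} (hq0 : 0 < q) (hq1 : q < 1)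

lemma qFact_zero : qFact q 0 = 1 := by simp [qFact]

include hq0 hq1 in
lemma qFact_ne (n : ℕ) : qFact q n ≠ 0 := ne_of_gt (qFact_pos hq0 hq1 n)

include hq0 hq1 in
lemma qBinom_zero (n : ℕ) : qBinom q n 0 = 1 := by
  rw [qBinom, qFact_zero, one_mul, Nat.sub_zero]
  exact div_self (qFact_ne hq0 hq1 n)

include hq0 hq1 in
lemma qBinom_self (n : ℕ) : qBinom q n n = 1 := by
  rw [qBinom, Nat.sub_self, qFact_zero, mul_one]
  exact div_self (qFact_ne hq0 hq1 n)

lemma qBinom_symm {n k : ℕ} (hk : k ≤ n) : qBinom q n k = qBinom q n (n - k) := by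
  rw [qBinom, qBinom, Nat.sub_sub_self hk, mul_comm]

include hq0 hq1 in
lemma pascal₁ {m k : ℕ} (hk : k + 1 ≤ m) :
    qBinom q (m+1) (k+1) = qBinom q m k + q^(k+1) * qBinom q m (k+1) := by
  have h1 : m + 1 - (k + 1) = m - k := by omega
  have h2 : m - k = (m - (k+1)) + 1 := by omega
  have key : qInt q ((m:ℤ)+1) = qInt q ((k:ℤ)+1) + q ^ (k+1) * qInt q ((m:ℤ) - k) := by
    have h := qInt_add hq0 hq1 (k+1) (m-k)
    have e1 : ((k+1 : ℕ) : ℤ) + ((m-k : ℕ) : ℤ) = (m:ℤ) + 1 := by push_cast [hk]; omega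
    have e2 : ((m-k : ℕ) : ℤ) = (m:ℤ) - k := by push_cast [hk]; omega
    rw [e1, e2] at h
    rw [h]; push_cast; ring_nf
  have em : qFact q (m+1) = qFact q m * qInt q ((m:ℤ)+1) := qFact_succ m
  have ek : qFact q (k+1) = qFact q k * qInt q ((k:ℤ)+1) := qFact_succ k
  have emk : qFact q (m-k) = qFact q (m-(k+1)) * qInt q ((m:ℤ)-k) := by
    have e3 : ((m - (k+1) : ℕ) : ℤ) + 1 = (m:ℤ) - k := by omega
    rw [h2, qFact_succ, e3]
  rw [qBinom, qBinom, qBinom, h1, em, ek, emk, key]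
  rw [show m - (k+1) = m - k - 1 by omega] at *
  have hfm := qFact_ne hq0 hq1 m
  have hfk := qFact_ne hq0 hq1 k
  have hfk1 := qFact_ne hq0 hq1 (m-k-1)
  have hik : qInt q ((k:ℤ)+1) ≠ 0 := ne_of_gt (qInt_pos hq0 hq1 (by omega))
  have him : qInt q ((m:ℤ)-k) ≠ 0 := ne_of_gt (qInt_pos hq0 hq1 (by omega))
  field_simp

include hq0 hq1 in
lemma pascal₂ {m k : ℕ} (hk : k + 1 ≤ m) :
    qBinom q (m+1) (k+1) = q^(m-k) * qBinom q m k + qBinom q m (k+1) := by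
  have h1 : m + 1 - (k + 1) = m - k := by omega
  have h2 : m - k = (m - (k+1)) + 1 := by omega
  have key : qInt q ((m:ℤ)+1) = qInt q ((m:ℤ)-k) + q ^ (m-k) * qInt q ((k:ℤ)+1) := by
    have h := qInt_add hq0 hq1 (m-k) (k+1)
    have e1 : ((m-k : ℕ) : ℤ) + ((k+1 : ℕ) : ℤ) = (m:ℤ) + 1 := by push_cast [hk]; omega
    have e2 : ((m-k : ℕ) : ℤ) = (m:ℤ) - k := by push_cast [hk]; omega
    rw [e1, e2] at h
    rw [h]; push_cast; ring_nf
  have em : qFact q (m+1) = qFact q m * qInt q ((m:ℤ)+1) := qFact_succ m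
  have ek : qFact q (k+1) = qFact q k * qInt q ((k:ℤ)+1) := qFact_succ k
  have emk : qFact q (m-k) = qFact q (m-(k+1)) * qInt q ((m:ℤ)-k) := by
    have e3 : ((m - (k+1) : ℕ) : ℤ) + 1 = (m:ℤ) - k := by omega
    rw [h2, qFact_succ, e3]
  rw [qBinom, qBinom, qBinom, h1, em, ek, emk, key]
  rw [show m - (k+1) = m - k - 1 by omega] at *
  have hfm := qFact_ne hq0 hq1 m
  have hfk := qFact_ne hq0 hq1 k
  have hfk1 := qFact_ne hq0 hq1 (m-k-1)
  have hik : qInt q ((k:ℤ)+1) ≠ 0 := ne_of_gt (qInt_pos hq0 hq1 (by omega))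
  have him : qInt q ((m:ℤ)-k) ≠ 0 := ne_of_gt (qInt_pos hq0 hq1 (by omega))
  field_simp
  ring

end binom

section qbt
variable {q : ℝ} (hq0 : 0 < q) (hq1 : q < 1)

include hq0 hq1 in
lemma qbt (θ : ℝ) : ∀ M : ℕ, ∑ j ∈ range (M+1), qBinom q M j * q^(bb j) * θ^j = oplus q θ M := by
  intro M
  induction M with
  | zero => simp [qBinom_self hq0 hq1, oplus, bb]
  | succ M ih =>
    rw [Finset.sum_range_succ', Finset.sum_range_succ]
    have step : ∀ j ∈ range M, qBinom q (M+1) (j+1) * q^(bb (j+1)) * θ^(j+1)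
        = (q^(M-j) * qBinom q M j + qBinom q M (j+1)) * q^(bb (j+1)) * θ^(j+1) := by
      intro j hj
      rw [pascal₂ hq0 hq1 (by simpa using mem_range.mp hj)]
    rw [Finset.sum_congr rfl step]
    simp only [add_mul, Finset.sum_add_distrib]
    set S := ∑ j ∈ range (M+1), qBinom q M j * q^(bb j) * θ^j with hS
    have e1' : (∑ j ∈ range M, q^(M-j) * qBinom q M j * q^(bb (j+1)) * θ^(j+1))
        + qBinom q (M+1) (M+1) * q^(bb (M+1)) * θ^(M+1) = θ * q^M * S := by
      rw [hS, Finset.sum_range_succ, mul_add, Finset.mul_sum]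
      congr 1
      · apply Finset.sum_congr rfl
        intro j hj
        have hj' := mem_range.mp hj
        have hpow : q^(M-j) * q^(bb (j+1)) = q^M * q^(bb j) := by
          rw [← pow_add, ← pow_add, bb_succ]
          congr 1
          omega
        calc q^(M-j) * qBinom q M j * q^(bb (j+1)) * θ^(j+1)
            = (q^(M-j) * q^(bb (j+1))) * (qBinom q M j * θ^(j+1)) := by ring
          _ = (q^M * q^(bb j)) * (qBinom q M j * θ^(j+1)) := by rw [hpow]
          _ = θ * q^M * (qBinom q M j * q^(bb j) * θ^j) := by ring
      · rw [qBinom_self hq0 hq1, qBinom_self hq0 hq1, bb_succ]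
        rw [pow_add]
        ring
    have e2 : ∑ j ∈ range M, qBinom q M (j+1) * q^(bb (j+1)) * θ^(j+1)
        = S - 1 := by
      rw [hS, Finset.sum_range_succ']
      simp [qBinom_zero hq0 hq1, bb]
    have hb0 : qBinom q (M+1) 0 * q ^ (bb 0) * θ ^ 0 = 1 := by
      norm_num [bb, qBinom_zero hq0 hq1]
    rw [oplus_succ, ← ih]
    linear_combination e1' + e2 + hb0
end qbt

section bound
variable {q : ℝ} (hq0 : 0 < q) (hq1 : q < 1)

lemma qFact_Ioc (n : ℕ) : qFact q n = ∏ i ∈ Finset.Ioc 0 n, qInt q (i:ℤ) := by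
  rw [qFact, ← Finset.Icc_add_one_left_eq_Ioc]
  rfl

include hq0 hq1 in
lemma qBinom_le {a k : ℕ} (hk : k ≤ a) : qBinom q a k ≤ (1/(1-q))^k / qFact q k := by
  have hsplit : qFact q a = qFact q (a-k) * ∏ i ∈ Finset.Ioc (a-k) a, qInt q (i:ℤ) := by
    rw [qFact_Ioc, qFact_Ioc, Finset.prod_Ioc_consecutive _ (Nat.zero_le _) (Nat.sub_le a k)]
  have hprod : (∏ i ∈ Finset.Ioc (a-k) a, qInt q (i:ℤ)) ≤ (1/(1-q))^k := by
    have : (∏ i ∈ Finset.Ioc (a-k) a, qInt q (i:ℤ)) ≤ ∏ _i ∈ Finset.Ioc (a-k) a, (1/(1-q)) := by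
      apply Finset.prod_le_prod
      · intro i hi
        exact qInt_nonneg hq0 hq1 (by exact_mod_cast Nat.zero_le i)
      · intro i _
        exact qInt_le hq0 hq1
    rw [Finset.prod_const, Nat.card_Ioc, Nat.sub_sub_self hk] at this
    exact this
  have hF := qFact_pos hq0 hq1 (a-k)
  have hK := qFact_pos hq0 hq1 k
  rw [qBinom, hsplit]
  rw [show (qFact q (a-k) * ∏ i ∈ Finset.Ioc (a-k) a, qInt q (i:ℤ)) / (qFact q k * qFact q (a-k))
      = (∏ i ∈ Finset.Ioc (a-k) a, qInt q (i:ℤ))/qFact q k by field_simp]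
  gcongr

end bound

noncomputable def Tf (q θ : ℝ) (M W : ℕ) : ℝ :=
  ∑ j ∈ range (M+1), θ^j * q^(j*W + bb j) * qBinom q (M+W) (M-j)

noncomputable def Gf (q θ : ℝ) (M W : ℕ) : ℝ :=
  θ^W * q^(bb W) * Tf q θ M W / oplus q θ (M+W)

section star
variable {q θ : ℝ} (hq0 : 0 < q) (hq1 : q < 1)

include hq0 hq1

lemma star (M W : ℕ) :
    (1 + θ * q^(M+W)) * Tf q θ M W = qBinom q (M+W) W + θ * q^W * Tf q θ M (W+1) := by
  have expand : θ * q^W * Tf q θ M (W+1)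
      = (∑ j ∈ range M, θ^(j+1) * q^(W + j*(W+1) + bb j) * qBinom q (M+W+1) (M-j))
        + θ^(M+1) * q^(W + M*(W+1) + bb M) := by
    rw [Tf, Finset.mul_sum, show M + (W+1) = M+W+1 from rfl, Finset.sum_range_succ]
    congr 1
    · apply Finset.sum_congr rfl
      intro j hj
      simp only [pow_add, pow_mul, pow_succ]
      ring
    · rw [Nat.sub_self, qBinom_zero hq0 hq1]
      simp only [pow_add, pow_mul, pow_succ]
      ring
  have hsplit : (∑ j ∈ range M, θ^(j+1) * q^(W + j*(W+1) + bb j) * qBinom q (M+W+1) (M-j))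
      = (∑ j ∈ range M, θ^(j+1) * q^(W + j*(W+1) + bb j) * qBinom q (M+W) (M-j-1))
        + (∑ j ∈ range M, θ^(j+1) * q^(W + j*(W+1) + bb j + (M-j)) * qBinom q (M+W) (M-j)) := by
    rw [← Finset.sum_add_distrib]
    apply Finset.sum_congr rfl
    intro j hj
    have hj' := mem_range.mp hj
    obtain ⟨k, hk⟩ : ∃ k, M - j = k + 1 := ⟨M-j-1, by omega⟩
    rw [hk, show k+1-1 = k from rfl, pascal₁ hq0 hq1 (by omega)]
    rw [pow_add]
    ring
  have claimA : (∑ j ∈ range M, θ^(j+1) * q^(W + j*(W+1) + bb j) * qBinom q (M+W) (M-j-1))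
      = Tf q θ M W - qBinom q (M+W) W := by
    have h0 : Tf q θ M W
        = (∑ j ∈ range M, θ^(j+1) * q^((j+1)*W + bb (j+1)) * qBinom q (M+W) (M-(j+1)))
          + θ^0 * q^(0*W + bb 0) * qBinom q (M+W) (M-0) := Finset.sum_range_succ' _ M
    have h1 : θ^0 * q^(0*W + bb 0) * qBinom q (M+W) (M-0) = qBinom q (M+W) W := by
      rw [Nat.sub_zero, qBinom_symm (n := M+W) (k := M) (by omega), Nat.add_sub_cancel_left]
      norm_num [bb]
    have h2 : (∑ j ∈ range M, θ^(j+1) * q^((j+1)*W + bb (j+1)) * qBinom q (M+W) (M-(j+1)))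
        = (∑ j ∈ range M, θ^(j+1) * q^(W + j*(W+1) + bb j) * qBinom q (M+W) (M-j-1)) := by
      apply Finset.sum_congr rfl
      intro j hj
      rw [bb_succ, Nat.sub_sub]
      simp only [pow_add, pow_mul, pow_succ]
      ring
    rw [h0, h1, h2]
    ring
  have claimB : (∑ j ∈ range M, θ^(j+1) * q^(W + j*(W+1) + bb j + (M-j)) * qBinom q (M+W) (M-j))
        + θ^(M+1) * q^(W + M*(W+1) + bb M)
      = θ * q^(M+W) * Tf q θ M W := by
    rw [Tf, Finset.mul_sum, Finset.sum_range_succ]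
    congr 1
    · apply Finset.sum_congr rfl
      intro j hj
      have hj' := mem_range.mp hj
      obtain ⟨d, hd⟩ : ∃ d, M = j + d + 1 := ⟨M-j-1, by omega⟩
      subst hd
      rw [show j + d + 1 - j = d + 1 from by omega]
      simp only [pow_add, pow_mul, pow_succ]
      ring
    · rw [Nat.sub_self, qBinom_zero hq0 hq1]
      simp only [pow_add, pow_mul, pow_succ]
      ring
  linear_combination -expand - hsplit - claimA - claimB

end star

section core
variable {q θ : ℝ} (hq0 : 0 < q) (hq1 : q < 1) (hθ0 : 0 < θ) (hθ1 : θ < 1)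

include hq0 hq1 hθ0

lemma Tf_nonneg (M W : ℕ) : 0 ≤ Tf q θ M W := by
  apply Finset.sum_nonneg
  intro j _
  have := qBinom_pos hq0 hq1 (M+W) (M-j)
  positivity

lemma Gf_nonneg (M W : ℕ) : 0 ≤ Gf q θ M W := by
  have h1 := Tf_nonneg hq0 hq1 hθ0 M W
  have h2 := oplus_pos hq0 (le_of_lt hθ0) (M+W)
  rw [Gf]
  positivity

lemma telescope (M W : ℕ) :
    Gf q θ M W - Gf q θ M (W+1)
      = qBinom q (M+W) W * θ^W * q^(bb W) / oplus q θ (M+1+W) := by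
  have hp := oplus_pos hq0 (le_of_lt hθ0) (M+W)
  have h1 : (0:ℝ) < 1 + θ * q^(M+W) := by positivity
  have hsucc : oplus q θ (M+W+1) = oplus q θ (M+W) * (1 + θ * q^(M+W)) := oplus_succ θ (M+W)
  rw [Gf, Gf, show M+(W+1) = M+W+1 from rfl, show M+1+W = M+W+1 from by ring, hsucc]
  rw [div_sub_div _ _ (ne_of_gt hp) (by positivity), div_eq_div_iff (by positivity) (by positivity)]
  have hstar := star hq0 hq1 (θ := θ) M W
  have hbb : q ^ (bb (W+1)) = q ^ (bb W) * q ^ W := by rw [← pow_add, bb_succ]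
  rw [hbb]
  linear_combination (oplus q θ (M+W) * oplus q θ (M+W) * (1 + θ*q^(M+W)) * θ^W * q^(bb W)) * hstar

lemma Gf_zero (M : ℕ) : Gf q θ M 0 = 1 := by
  have hp := oplus_pos hq0 (le_of_lt hθ0) M
  have hT : Tf q θ M 0 = oplus q θ M := by
    rw [Tf, ← qbt hq0 hq1 θ M]
    apply Finset.sum_congr rfl
    intro j hj
    have hj' := mem_range.mp hj
    rw [qBinom_symm (n := M) (k := j) (by omega)]
    ring_nf
  rw [Gf, Nat.add_zero, hT]
  norm_num [bb]
  exact ne_of_gt hp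

include hθ1 in
lemma Gf_tendsto (M : ℕ) :
    Filter.Tendsto (fun W => Gf q θ M W) Filter.atTop (nhds 0) := by
  set B : ℝ := ∑ j ∈ range (M+1), (1/(1-q))^(M-j) / qFact q (M-j) with hB
  have hBnn : 0 ≤ B := by
    apply Finset.sum_nonneg
    intro j _
    have := qFact_pos hq0 hq1 (M-j)
    have : (0:ℝ) < 1 - q := by linarith
    positivity
  have hGle : ∀ W, Gf q θ M W ≤ B * θ^W := by
    intro W
    have hTle : Tf q θ M W ≤ B := by
      rw [Tf, hB]
      apply Finset.sum_le_sum
      intro j hj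
      have hj' := mem_range.mp hj
      have h1 : θ^j ≤ 1 := pow_le_one₀ (le_of_lt hθ0) (le_of_lt hθ1)
      have h2 : q^(j*W + bb j) ≤ 1 := pow_le_one₀ (le_of_lt hq0) (le_of_lt hq1)
      have h3 : qBinom q (M+W) (M-j) ≤ (1/(1-q))^(M-j) / qFact q (M-j) :=
        qBinom_le hq0 hq1 (by omega)
      have hb := qBinom_pos hq0 hq1 (M+W) (M-j)
      calc θ^j * q^(j*W + bb j) * qBinom q (M+W) (M-j)
          ≤ 1 * 1 * qBinom q (M+W) (M-j) := by
            have h12 : θ^j * q^(j*W + bb j) ≤ 1 * 1 := mul_le_mul h1 h2 (by positivity) zero_le_one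
            exact mul_le_mul_of_nonneg_right h12 hb.le
        _ = qBinom q (M+W) (M-j) := by ring
        _ ≤ _ := h3
    have hop := one_le_oplus hq0 (le_of_lt hθ0) (M+W)
    have hTnn := Tf_nonneg hq0 hq1 hθ0 M W
    rw [Gf]
    calc θ^W * q^(bb W) * Tf q θ M W / oplus q θ (M+W)
        ≤ θ^W * q^(bb W) * Tf q θ M W / 1 := by
          apply div_le_div_of_nonneg_left (by positivity) one_pos hop
      _ = θ^W * (q^(bb W) * Tf q θ M W) := by ring
      _ ≤ θ^W * (1 * B) := by
          apply mul_le_mul_of_nonneg_left _ (by positivity)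
          exact mul_le_mul (pow_le_one₀ (le_of_lt hq0) (le_of_lt hq1)) hTle hTnn zero_le_one
      _ = B * θ^W := by ring
  have h0 : Filter.Tendsto (fun W : ℕ => B * θ^W) Filter.atTop (nhds 0) := by
    have := tendsto_pow_atTop_nhds_zero_of_lt_one (le_of_lt hθ0) hθ1
    simpa using this.const_mul B
  apply squeeze_zero (fun W => Gf_nonneg hq0 hq1 hθ0 M W) hGle h0

include hθ1 in
lemma core (M : ℕ) :
    HasSum (fun w => qBinom q (M + w) w * θ^w * q^(bb w) / oplus q θ (M + 1 + w)) 1 := by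
  have hnn : ∀ w : ℕ, 0 ≤ qBinom q (M + w) w * θ^w * q^(bb w) / oplus q θ (M + 1 + w) := by
    intro w
    have h1 := qBinom_pos hq0 hq1 (M+w) w
    have h2 := oplus_pos hq0 (le_of_lt hθ0) (M+1+w)
    positivity
  rw [hasSum_iff_tendsto_nat_of_nonneg hnn]
  have hps : ∀ W, ∑ w ∈ range W, qBinom q (M + w) w * θ^w * q^(bb w) / oplus q θ (M + 1 + w)
      = 1 - Gf q θ M W := by
    intro W
    have : ∀ w, qBinom q (M + w) w * θ^w * q^(bb w) / oplus q θ (M + 1 + w)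
        = Gf q θ M w - Gf q θ M (w+1) := fun w => (telescope hq0 hq1 hθ0 M w).symm
    rw [Finset.sum_congr rfl (fun w _ => this w), Finset.sum_range_sub' (Gf q θ M) W,
      Gf_zero hq0 hq1 hθ0]
  simp only [hps]
  have := (Gf_tendsto hq0 hq1 hθ0 hθ1 M).const_sub 1
  simpa using this

end core

section fall
variable {q : ℝ} (hq0 : 0 < q) (hq1 : q < 1)

lemma prod_zpow_sum (hq : q ≠ 0) (s : Finset ℕ) (f : ℕ → ℤ) :
    ∏ i ∈ s, q ^ (f i) = q ^ (∑ i ∈ s, f i) := by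
  induction s using Finset.cons_induction with
  | empty => simp
  | cons a s ha ih => rw [Finset.prod_cons, Finset.sum_cons, ih, zpow_add₀ hq]

lemma sum_Icc_id (m : ℕ) : ∑ i ∈ Finset.Icc 1 m, (i : ℤ) = bb (m+1) := by
  induction m with
  | zero => simp [bb]
  | succ m ih =>
    rw [Finset.sum_Icc_succ_top (by omega), ih, show bb (m+1+1) = bb (m+1) + (m+1) from bb_succ (m+1)]
    push_cast
    ring

include hq0 in
lemma qFallInv_eq (u : ℤ) (m : ℕ) :
    qFallInv q u m = q ^ ((bb (m+1) : ℤ) - m * u) * qFall q u m := by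
  have hq : q ≠ 0 := ne_of_gt hq0
  rw [qFallInv, qFall]
  have : ∀ i ∈ Finset.Icc 1 m, qIntInv q (u - (i:ℤ) + 1)
      = q ^ ((i:ℤ) - u) * qInt q (u - (i:ℤ) + 1) := by
    intro i _
    rw [qIntInv]
    congr 1
    ring_nf
  rw [Finset.prod_congr rfl this, Finset.prod_mul_distrib, prod_zpow_sum hq]
  congr 2
  rw [Finset.sum_sub_distrib, sum_Icc_id, Finset.sum_const, Nat.card_Icc]
  simp

lemma qFallInv_zero_of_lt {w m : ℕ} (hw : w < m) : qFallInv q (w : ℤ) m = 0 := by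
  rw [qFallInv]
  apply Finset.prod_eq_zero (i := w + 1) (by simp [Finset.mem_Icc]; omega)
  rw [show (w:ℤ) - (((w+1 : ℕ)):ℤ) + 1 = 0 by push_cast; ring]
  simp [qIntInv, qInt]

lemma qFall_mul_qFact : ∀ (m a : ℕ), qFall q ((a + m : ℕ) : ℤ) m * qFact q a = qFact q (a + m) := by
  intro m
  induction m with
  | zero => intro a; simp [qFall]
  | succ m ih =>
    intro a
    have step : qFall q ((a + (m+1) : ℕ) : ℤ) (m+1)
        = qFall q (((a+1) + m : ℕ) : ℤ) m * qInt q ((a:ℤ) + 1) := by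
      rw [qFall, Finset.prod_Icc_succ_top (by omega), ← qFall]
      congr 2
      · congr 1; push_cast; ring
      · push_cast; ring
    rw [step, show a + (m+1) = (a+1) + m from by omega]
    calc qFall q (((a+1) + m : ℕ) : ℤ) m * qInt q ((a:ℤ) + 1) * qFact q a
        = qFall q (((a+1) + m : ℕ) : ℤ) m * (qFact q a * qInt q ((a:ℤ) + 1)) := by ring
      _ = qFall q (((a+1) + m : ℕ) : ℤ) m * qFact q (a+1) := by rw [← qFact_succ]
      _ = qFact q ((a+1) + m) := ih (a+1)

include hq0 hq1 in
lemma qFall_pos (a m : ℕ) : 0 < qFall q ((a + m : ℕ) : ℤ) m := by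
  have h1 := qFact_pos hq0 hq1 a
  have h2 := qFact_pos hq0 hq1 (a + m)
  have := qFall_mul_qFact (q := q) m a
  nlinarith

end fall

section diamond
variable {q : ℝ} (hq0 : 0 < q) (hq1 : q < 1)

lemma two_bb (k : ℕ) : 2 * bb k = k * (k - 1) := by
  have : 2 ∣ k * (k - 1) := (Nat.even_mul_pred_self k).two_dvd
  simp [bb, Nat.mul_div_cancel' this]

lemma two_bb' (m : ℕ) : (2 * bb m : ℤ) = m * m - m := by
  have h := two_bb m
  rcases Nat.eq_zero_or_pos m with rfl | hm
  · simp [bb]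
  · have : (m : ℤ) * ((m:ℤ) - 1) = (m:ℤ)*m - m := by ring
    rw [show (2 * bb m : ℤ) = ((2 * bb m : ℕ) : ℤ) from by push_cast; ring, h]
    push_cast [Nat.cast_sub hm]
    ring

include hq0 hq1 in
lemma diamond (n' m v : ℕ) :
    qFallInv q ((v + m : ℕ) : ℤ) m * qBinom q (n'+(v+m)) (v+m) * q^(bb (v+m))
    = qFall q ((n' + m : ℕ) : ℤ) m * qBinom q ((n'+m)+v) v * q^(bb v) := by
  have hfv := qFact_ne hq0 hq1 v
  have hfn := qFact_ne hq0 hq1 n'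
  have hfvm := qFact_ne hq0 hq1 (v+m)
  have hfnm := qFact_ne hq0 hq1 (n'+m)
  have e1 : qFall q ((v + m : ℕ) : ℤ) m * qFact q v = qFact q (v+m) := qFall_mul_qFact m v
  have e2 : qFall q ((n' + m : ℕ) : ℤ) m * qFact q n' = qFact q (n'+m) := qFall_mul_qFact m n'
  have epow : q ^ ((bb (m+1) : ℤ) - m * ((v + m : ℕ) : ℤ)) * q^(bb (v+m)) = q^(bb v) := by
    have hq : q ≠ 0 := ne_of_gt hq0
    rw [show (q : ℝ)^(bb (v+m)) = q^((bb (v+m) : ℤ)) from (zpow_natCast q _).symm,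
      show (q : ℝ)^(bb v) = q^((bb v : ℤ)) from (zpow_natCast q _).symm, ← zpow_add₀ hq]
    congr 1
    have h1 : (bb (v+m) : ℤ) = bb v + bb m + v * m := by rw [bb_add]; push_cast; ring
    have h2 : (bb (m+1) : ℤ) = bb m + m := by rw [bb_succ]; push_cast; ring
    have h3 := two_bb' m
    push_cast at h1 h2 ⊢
    rw [h1, h2]
    linear_combination h3
  rw [qFallInv_eq hq0, qBinom, qBinom,
    show n'+(v+m) - (v+m) = n' from by omega, show (n'+m)+v - v = n'+m from by omega,
    show n'+(v+m) = (n'+m)+v from by omega]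
  have key : q ^ ((bb (m+1) : ℤ) - m * ((v + m : ℕ) : ℤ)) * qFall q ((v + m : ℕ) : ℤ) m * q^(bb (v+m))
      * (qFact q v * qFact q (n'+m))
      = qFall q ((n' + m : ℕ) : ℤ) m * q^(bb v) * (qFact q (v+m) * qFact q n') := by
    calc q ^ ((bb (m+1) : ℤ) - m * ((v + m : ℕ) : ℤ)) * qFall q ((v + m : ℕ) : ℤ) m * q^(bb (v+m))
        * (qFact q v * qFact q (n'+m))
        = (q ^ ((bb (m+1) : ℤ) - m * ((v + m : ℕ) : ℤ)) * q^(bb (v+m)))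
          * (qFall q ((v + m : ℕ) : ℤ) m * qFact q v) * qFact q (n'+m) := by ring
      _ = q^(bb v) * qFact q (v+m) * (qFall q ((n' + m : ℕ) : ℤ) m * qFact q n') := by
          rw [epow, e1, ← e2]
      _ = _ := by ring
  field_simp
  push_cast at key ⊢
  linear_combination qFact q ((n'+m)+v) * key

end diamond

section hsum
variable {q α : ℝ} (hq0 : 0 < q) (hq1 : q < 1) (hα0 : 0 < α) (hα1 : α < 1)

include hq0 hq1 in
lemma qFallInv_nonneg (w m : ℕ) : 0 ≤ qFallInv q (w : ℤ) m := by
  rcases lt_or_ge w m with h | h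
  · rw [qFallInv_zero_of_lt h]
  · rw [qFallInv]
    apply Finset.prod_nonneg
    intro i hi
    have hi' := Finset.mem_Icc.mp hi
    have hk : (0:ℤ) < (w:ℤ) - i + 1 := by omega
    have := qInt_pos hq0 hq1 hk
    have := zpow_pos hq0 (1 - ((w:ℤ) - i + 1))
    rw [qIntInv]
    positivity

include hq0 hq1 hα0 hα1 in
lemma hsum (n' m : ℕ) :
    HasSum (fun w : ℕ => qFallInv q (w:ℤ) m * qBinom q (n'+w) w * α^w * q^(bb w)
        / oplus q α (n'+1+w))
      (α^m * qFall q ((n' + m : ℕ) : ℤ) m) := by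
  set f : ℕ → ℝ := fun w : ℕ => qFallInv q (w:ℤ) m * qBinom q (n'+w) w * α^w * q^(bb w)
        / oplus q α (n'+1+w) with hf
  have hinj : Function.Injective (fun v : ℕ => v + m) := fun a b h => by simpa using h
  rw [← Function.Injective.hasSum_iff hinj ?_]
  · have hcongr : ∀ v, (f ∘ (fun v : ℕ => v + m)) v
        = (α^m * qFall q ((n' + m : ℕ) : ℤ) m)
          * (qBinom q ((n'+m) + v) v * α^v * q^(bb v) / oplus q α ((n'+m) + 1 + v)) := by
      intro v
      have hd := diamond hq0 hq1 n' m v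
      have hop : n'+1+(v+m) = (n'+m)+1+v := by omega
      have hopos := oplus_pos hq0 (le_of_lt hα0) ((n'+m)+1+v)
      simp only [hf, Function.comp_apply, hop]
      rw [mul_div_assoc']
      congr 1
      rw [pow_add]
      linear_combination (α^v * α^m) * hd
    rw [funext hcongr]
    simpa using (core hq0 hq1 hα0 hα1 (n'+m)).mul_left (α^m * qFall q ((n' + m : ℕ) : ℤ) m)
  · intro w hw
    have hwm : w < m := by
      by_contra h
      exact hw ⟨w - m, by simp; omega⟩
    simp only [hf]
    rw [qFallInv_zero_of_lt hwm]
    simp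

end hsum


theorem stmt6 (q : ℝ) (hq0 : 0 < q) (hq1 : q < 1) (n : ℕ) (hn : 1 ≤ n) (α1 α2 : ℝ)
    (hα1 : 0 < α1) (hα1' : α1 < 1) (hα2 : 0 < α2) (hα2' : α2 < 1) (m2 : ℕ) :
    HasSum (fun w : ℕ × ℕ =>
        qFallInv q (w.2 : ℤ) m2 * gpmf q α1 α2 n w.1 w.2)
      (α2 ^ m2 * qFall q ((n : ℤ) + (m2 : ℤ) - 1) m2) := by
  obtain ⟨n', rfl⟩ : ∃ n', n = n' + 1 := ⟨n - 1, by omega⟩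
  have htar : (((n' + 1 : ℕ)) : ℤ) + (m2 : ℤ) - 1 = ((n' + m2 : ℕ) : ℤ) := by push_cast; ring
  rw [htar]
  set tgt := α2 ^ m2 * qFall q ((n' + m2 : ℕ) : ℤ) m2 with htgt
  set f₂ : ℕ → ℝ := fun w2 : ℕ => qFallInv q (w2:ℤ) m2 * qBinom q (n'+w2) w2 * α2^w2 * q^(bb w2)
        / oplus q α2 (n'+1+w2) with hf₂
  set F : ℕ → ℕ → ℝ := fun w2 w1 => qBinom q ((n'+w2) + w1) w1 * α1^w1 * q^(bb w1)
        / oplus q α1 ((n'+w2) + 1 + w1) with hF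
  have hw2 : ∀ w2, HasSum (fun w1 => f₂ w2 * F w2 w1) (f₂ w2) := by
    intro w2
    simpa using (core hq0 hq1 hα1 hα1' (n'+w2)).mul_left (f₂ w2)
  have hf2sum : HasSum f₂ tgt := hsum hq0 hq1 hα2 hα2' n' m2
  have hFnn : ∀ w2 w1, 0 ≤ F w2 w1 := by
    intro w2 w1
    have h1 := qBinom_pos hq0 hq1 ((n'+w2)+w1) w1
    have h2 := oplus_pos hq0 (le_of_lt hα1) ((n'+w2)+1+w1)
    simp only [hF]
    positivity
  have hf2nn : ∀ w2, 0 ≤ f₂ w2 := by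
    intro w2
    have h1 := qFallInv_nonneg hq0 hq1 w2 m2
    have h2 := qBinom_pos hq0 hq1 (n'+w2) w2
    have h3 := oplus_pos hq0 (le_of_lt hα2) (n'+1+w2)
    simp only [hf₂]
    positivity
  have hnn : ∀ p : ℕ × ℕ, 0 ≤ f₂ p.1 * F p.1 p.2 :=
    fun p => mul_nonneg (hf2nn p.1) (hFnn p.1 p.2)
  have hsummable : Summable (fun p : ℕ × ℕ => f₂ p.1 * F p.1 p.2) := by
    rw [summable_prod_of_nonneg hnn]
    constructor
    · exact fun w2 => (hw2 w2).summable
    · apply Summable.congr hf2sum.summable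
      intro w2
      exact ((hw2 w2).tsum_eq).symm
  have hts : HasSum (fun p : ℕ × ℕ => f₂ p.1 * F p.1 p.2) tgt := by
    have h := hsummable.hasSum
    have he : ∑' p : ℕ × ℕ, f₂ p.1 * F p.1 p.2 = tgt := by
      rw [Summable.tsum_prod' hsummable (fun w2 => (hw2 w2).summable)]
      calc ∑' w2, ∑' w1, f₂ w2 * F w2 w1 = ∑' w2, f₂ w2 :=
            tsum_congr (fun w2 => (hw2 w2).tsum_eq)
        _ = tgt := hf2sum.tsum_eq
    rwa [he] at h
  have hswap : HasSum (fun p : ℕ × ℕ => f₂ p.2 * F p.2 p.1) tgt := by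
    have := ((Equiv.prodComm ℕ ℕ).hasSum_iff (f := fun p : ℕ × ℕ => f₂ p.1 * F p.1 p.2)
      (a := tgt)).mpr hts
    exact this
  apply HasSum.congr_fun hswap ?_
  intro p
  obtain ⟨w1, w2⟩ := p
  have hfw1 := qFact_ne hq0 hq1 w1
  have hfw2 := qFact_ne hq0 hq1 w2
  have hfn' := qFact_ne hq0 hq1 n'
  have hop1 := oplus_pos hq0 (le_of_lt hα1) (n'+w2+1+w1)
  have hop2 := oplus_pos hq0 (le_of_lt hα2) (n'+1+w2)
  have tri : qFact q (n'+w1+w2)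
      = qBinom q (n'+w2+w1) w1 * qBinom q (n'+w2) w2 * (qFact q w1 * qFact q w2 * qFact q n') := by
    rw [qBinom, qBinom, show n'+w2+w1-w1 = n'+w2 from by omega,
      show n'+w2-w2 = n' from by omega, show n'+w2+w1 = n'+w1+w2 from by omega]
    have h1 := qFact_ne hq0 hq1 (n'+w2)
    field_simp
  simp only [hf₂, hF, gpmf]
  rw [show n'+1+w1+w2-1 = n'+w1+w2 from by omega, show n'+1-1 = n' from by omega,
    show n'+1+w1+w2 = n'+w2+1+w1 from by omega, tri, pow_add]
  field_simp
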